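/- arXiv:1203.3036 — 6 statements merged into one kernel-verified Lean document; each statement's English description precedes it below -/
import Mathlib

section
/- If a family of Markov kernels {P_θ} satisfies P_θ W(x) ≤ λ̃ W(x) + b̃ θ(W) for all x, for a sequence of adapted kernels with E[f(X_{n+1}) | F_n] = P_{θ_n} f(X_n) and sup_k E[θ_k(W)] < ∞, then E[W(X_n)] ≤ λ̃^n E[W(X_0)] + (b̃/(1-λ̃)) sup_{k≥0} E[θ_k(W)] for all n. -/
open MeasureTheory ProbabilityTheory Measure
open scoped ProbabilityTheory

/-- If a family of Markov kernels `{P_θ}` indexed by probability measures `θ` satisfies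
`P_θ W(x) ≤ λ̃ W(x) + b̃ θ(W)`, and `{(X_n, θ_n)}` is an adapted process with
`E[W(X_{n+1}) | F_n] = P_{θ_n} W(X_n)` and `sup_k E[θ_k(W)] < ∞`, then
`E[W(X_n)] ≤ λ̃^n E[W(X_0)] + (b̃/(1-λ̃)) sup_{k≥0} E[θ_k(W)]`. -/
theorem adaptive_drift_moment_bound
    {X : Type*} [MeasurableSpace X]
    {Ω : Type*} {mΩ : MeasurableSpace Ω} (μ : Measure Ω) [IsProbabilityMeasure μ]
    (ℱ : Filtration ℕ mΩ)
    (P : Measure X → Kernel X X) (hP : ∀ θ, IsMarkovKernel (P θ))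
    (W : X → ℝ) (hWmeas : Measurable W) (hW1 : ∀ x, 1 ≤ W x)
    (lam b : ℝ) (hlam : lam ∈ Set.Ioo (0:ℝ) 1) (hb : 0 ≤ b)
    (hdrift : ∀ (θ : Measure X), IsProbabilityMeasure θ →
      ∀ x, ∫ y, W y ∂((P θ) x) ≤ lam * W x + b * ∫ y, W y ∂θ)
    (Xp : ℕ → Ω → X) (θp : ℕ → Ω → Measure X)
    (hθprob : ∀ n ω, IsProbabilityMeasure (θp n ω))
    (hXadapted : ∀ n, Measurable[ℱ n] (Xp n))
    (hint : ∀ n, Integrable (fun ω => W (Xp n ω)) μ)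
    (hintθ : ∀ n, Integrable (fun ω => ∫ y, W y ∂(θp n ω)) μ)
    (hcond : ∀ n, μ[(fun ω => W (Xp (n+1) ω)) | ℱ n]
      =ᵐ[μ] fun ω => ∫ y, W y ∂((P (θp n ω)) (Xp n ω)))
    (hbdd : BddAbove (Set.range fun k : ℕ => ∫ ω, (∫ y, W y ∂(θp k ω)) ∂μ))
    (hX0 : Integrable (fun ω => W (Xp 0 ω)) μ) (n : ℕ) :
    ∫ ω, W (Xp n ω) ∂μ ≤
      lam ^ n * ∫ ω, W (Xp 0 ω) ∂μ +
        (b / (1 - lam)) * ⨆ k : ℕ, ∫ ω, (∫ y, W y ∂(θp k ω)) ∂μ := by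
  obtain ⟨hlam0, hlam1⟩ := hlam
  set S : ℝ := ⨆ k : ℕ, ∫ ω, (∫ y, W y ∂(θp k ω)) ∂μ with hS
  have hWnn : ∀ x, (0:ℝ) ≤ W x := fun x => le_trans zero_le_one (hW1 x)
  have hθnn : ∀ k, (0:ℝ) ≤ ∫ ω, (∫ y, W y ∂(θp k ω)) ∂μ := fun k =>
    integral_nonneg fun ω => integral_nonneg fun y => hWnn y
  have hSle : ∀ k, ∫ ω, (∫ y, W y ∂(θp k ω)) ∂μ ≤ S := fun k => le_ciSup hbdd k
  have hSnn : (0:ℝ) ≤ S := le_trans (hθnn 0) (hSle 0)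
  have hstep : ∀ m, ∫ ω, W (Xp (m+1) ω) ∂μ ≤ lam * ∫ ω, W (Xp m ω) ∂μ + b * S := by
    intro m
    have h1 : ∫ ω, W (Xp (m+1) ω) ∂μ
        = ∫ ω, ∫ y, W y ∂((P (θp m ω)) (Xp m ω)) ∂μ := by
      rw [← integral_condExp (ℱ.le m) (f := fun ω => W (Xp (m+1) ω))]
      exact integral_congr_ae (hcond m)
    rw [h1]
    have hrint : Integrable (fun ω => lam * W (Xp m ω) + b * ∫ y, W y ∂(θp m ω)) μ :=
      ((hint m).const_mul lam).add ((hintθ m).const_mul b)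
    calc ∫ ω, ∫ y, W y ∂((P (θp m ω)) (Xp m ω)) ∂μ
        ≤ ∫ ω, (lam * W (Xp m ω) + b * ∫ y, W y ∂(θp m ω)) ∂μ := by
          refine integral_mono_of_nonneg ?_ hrint ?_
          · exact Filter.Eventually.of_forall fun ω => integral_nonneg fun y => hWnn y
          · exact Filter.Eventually.of_forall fun ω => hdrift _ (hθprob m ω) _
      _ = lam * ∫ ω, W (Xp m ω) ∂μ + b * ∫ ω, (∫ y, W y ∂(θp m ω)) ∂μ := by
          rw [integral_add ((hint m).const_mul lam) ((hintθ m).const_mul b),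
            integral_const_mul, integral_const_mul]
      _ ≤ lam * ∫ ω, W (Xp m ω) ∂μ + b * S :=
          add_le_add (le_refl _) (mul_le_mul_of_nonneg_left (hSle m) hb)
  induction n with
  | zero =>
    have : 0 ≤ b / (1 - lam) * S :=
      mul_nonneg (div_nonneg hb (by linarith)) hSnn
    simpa using by linarith
  | succ n ih =>
    have h2 := hstep n
    have h3 : lam * ∫ ω, W (Xp n ω) ∂μ
        ≤ lam * (lam ^ n * ∫ ω, W (Xp 0 ω) ∂μ + b / (1 - lam) * S) :=
      mul_le_mul_of_nonneg_left ih (le_of_lt hlam0)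
    have heq : lam * (lam ^ n * ∫ ω, W (Xp 0 ω) ∂μ + b / (1 - lam) * S) + b * S
        = lam ^ (n+1) * ∫ ω, W (Xp 0 ω) ∂μ + b / (1 - lam) * S := by
      have h1l : (1 - lam) ≠ 0 := by linarith
      field_simp
      ring
    linarith
end

section
/- Let {P_θ} be Markov kernels with invariant probabilities π_θ, satisfying ‖P_θ^n(x,·) − π_θ‖_V ≤ C_θ ρ_θ^n V(x). Then for any θ, θ' and any x ∈ X, ‖π_θ − π_{θ'}‖_V ≤ L_{θ'}^2 { π_θ(V) + L_θ^2 V(x) } D_V(θ, θ'), where L_θ := C_θ ∨ (1−ρ_θ)^{−1} and D_V(θ,θ') := sup_x ‖P_θ(x,·) − P_{θ'}(x,·)‖_V / V(x). -/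
open MeasureTheory ProbabilityTheory Filter Topology
open scoped ProbabilityTheory Topology

/-- The `n`-fold iterate `P^n` of a Markov kernel. -/
noncomputable def iterKernel {X : Type*} [MeasurableSpace X] (P : Kernel X X) : ℕ → Kernel X X
  | 0 => Kernel.id
  | n + 1 => P ∘ₖ iterKernel P n

section Aux

variable {X : Type*} [MeasurableSpace X]

lemma iterKernel_zero (P : Kernel X X) : iterKernel P 0 = Kernel.id := rfl

lemma iterKernel_succ (P : Kernel X X) (n : ℕ) :
    iterKernel P (n + 1) = P ∘ₖ iterKernel P n := rfl

instance iterKernel_isMarkov (P : Kernel X X) [IsMarkovKernel P] (n : ℕ) :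
    IsMarkovKernel (iterKernel P n) := by
  induction n with
  | zero => rw [iterKernel_zero]; infer_instance
  | succ n ih => rw [iterKernel_succ]; infer_instance

lemma iterKernel_succ' (P : Kernel X X) [IsMarkovKernel P] (n : ℕ) :
    iterKernel P (n + 1) = iterKernel P n ∘ₖ P := by
  induction n with
  | zero => rw [iterKernel_succ, iterKernel_zero, Kernel.comp_id, Kernel.id_comp]
  | succ n ih =>
      rw [iterKernel_succ, ih, ← Kernel.comp_assoc, ← iterKernel_succ, ih]

lemma my_integral_bind {μ : Measure X} [IsProbabilityMeasure μ] {κ : Kernel X X}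
    [IsMarkovKernel κ] {g : X → ℝ} (hg : Measurable g) (hgi : Integrable g (μ.bind κ)) :
    ∫ y, g y ∂(μ.bind κ) = ∫ a, ∫ y, g y ∂(κ a) ∂μ := by
  have hmap : μ.bind κ = (μ ⊗ₘ κ).map Prod.snd := by
    ext s hs
    rw [Measure.map_apply measurable_snd hs, Measure.compProd_apply (measurable_snd hs),
      Measure.bind_apply hs κ.measurable.aemeasurable]
    rfl
  rw [hmap] at hgi ⊢
  rw [integral_map measurable_snd.aemeasurable hg.aestronglyMeasurable]
  exact Measure.integral_compProd
    ((integrable_map_measure hg.aestronglyMeasurable measurable_snd.aemeasurable).mp hgi)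

lemma integral_iter_succ (P : Kernel X X) [IsMarkovKernel P] (n : ℕ) (x : X) {g : X → ℝ}
    (hg : Measurable g) (hgi : Integrable g (iterKernel P (n + 1) x)) :
    ∫ y, g y ∂(iterKernel P (n + 1) x) = ∫ a, ∫ y, g y ∂(P a) ∂(iterKernel P n x) := by
  have h : iterKernel P (n + 1) x = (iterKernel P n x).bind P := by
    rw [iterKernel_succ, Kernel.comp_apply]
  rw [h] at hgi ⊢
  exact my_integral_bind hg hgi

lemma integral_iter_succ' (P : Kernel X X) [IsMarkovKernel P] (n : ℕ) (x : X) {g : X → ℝ}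
    (hg : Measurable g) (hgi : Integrable g (iterKernel P (n + 1) x)) :
    ∫ y, g y ∂(iterKernel P (n + 1) x) = ∫ a, ∫ y, g y ∂(iterKernel P n a) ∂(P x) := by
  have h : iterKernel P (n + 1) x = (P x).bind (iterKernel P n) := by
    rw [iterKernel_succ' P n, Kernel.comp_apply]
  rw [h] at hgi ⊢
  exact my_integral_bind hg hgi

lemma iterKernel_one (P : Kernel X X) [IsMarkovKernel P] (x : X) :
    iterKernel P 1 x = P x := by
  rw [iterKernel_succ, Kernel.comp_apply, iterKernel_zero, Kernel.id_apply,
    Measure.dirac_bind P.measurable]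

lemma measurable_kernel_integral (κ : Kernel X X) [IsSFiniteKernel κ] {f : X → ℝ}
    (hf : Measurable f) : Measurable fun y => ∫ z, f z ∂(κ y) :=
  (MeasureTheory.StronglyMeasurable.integral_kernel_prod_right
    (f := fun _ z => f z) (κ := κ)
    ((hf.comp measurable_snd).stronglyMeasurable)).measurable

lemma integrable_V_iter (P : Kernel X X) [IsMarkovKernel P]
    {V : X → ℝ} (hVmeas : Measurable V) (hV1 : ∀ x, 1 ≤ V x)
    (π : Measure X) [IsProbabilityMeasure π] (hVint : Integrable V π)
    {C ρ : ℝ}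
    (herg : ∀ f : X → ℝ, Measurable f → (∀ y, |f y| ≤ V y) → ∀ n x,
      |∫ y, f y ∂(iterKernel P n x) - ∫ y, f y ∂π| ≤ C * ρ ^ n * V x)
    (n : ℕ) (x : X) :
    Integrable V (iterKernel P n x) ∧
      ∫ y, V y ∂(iterKernel P n x) ≤ (∫ y, V y ∂π) + C * ρ ^ n * V x := by
  have hV0 : ∀ y, (0:ℝ) ≤ V y := fun y => zero_le_one.trans (hV1 y)
  set μ := iterKernel P n x with hμ
  have hCρ : 0 ≤ C * ρ ^ n * V x := by
    have h := herg (fun _ => (1:ℝ)) measurable_const (fun y => by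
      rw [abs_one]; exact hV1 y) n x
    simp only [integral_const, measure_univ, ENNReal.toReal_one, probReal_univ, one_smul, sub_self,
      abs_zero] at h
    exact h
  set B := (∫ y, V y ∂π) + C * ρ ^ n * V x with hB
  have hπV0 : 0 ≤ ∫ y, V y ∂π := integral_nonneg hV0
  have hB0 : 0 ≤ B := by positivity
  set t : ℕ → X → ℝ := fun M y => min (V y) (M : ℝ) with ht
  have htmeas : ∀ M, Measurable (t M) := fun M => hVmeas.min measurable_const
  have ht0 : ∀ M y, 0 ≤ t M y := fun M y => le_min (hV0 y) (Nat.cast_nonneg M)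
  have htV : ∀ M y, |t M y| ≤ V y := fun M y => by
    rw [abs_of_nonneg (ht0 M y)]; exact min_le_left _ _
  have htint : ∀ (M : ℕ) (ν : Measure X), IsProbabilityMeasure ν → Integrable (t M) ν := by
    intro M ν hν
    exact (integrable_const (M : ℝ)).mono' (htmeas M).aestronglyMeasurable
      (ae_of_all _ fun y => by
        rw [Real.norm_eq_abs, abs_of_nonneg (ht0 M y)]; exact min_le_right _ _)
  have htbound : ∀ M, ∫ y, t M y ∂μ ≤ B := by
    intro M
    have h1 := herg (t M) (htmeas M) (htV M) n x
    have h2 : ∫ y, t M y ∂π ≤ ∫ y, V y ∂π :=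
      integral_mono (htint M π inferInstance) hVint (fun y => min_le_left _ _)
    have h3 := (abs_le.mp h1).2
    rw [hB]; linarith
  have hlin : ∫⁻ y, ENNReal.ofReal (V y) ∂μ ≤ ENNReal.ofReal B := by
    have hsup : ∀ y, (⨆ M : ℕ, ENNReal.ofReal (t M y)) = ENNReal.ofReal (V y) := by
      intro y
      apply le_antisymm
      · exact iSup_le fun M => ENNReal.ofReal_le_ofReal (min_le_left _ _)
      · refine le_iSup_of_le ⌈V y⌉₊ ?_
        rw [ht]
        simp only []
        rw [min_eq_left (Nat.le_ceil _)]
    have hmono : Monotone fun M : ℕ => fun y => ENNReal.ofReal (t M y) := by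
      intro M N hMN y
      exact ENNReal.ofReal_le_ofReal (min_le_min le_rfl (by exact_mod_cast hMN))
    calc ∫⁻ y, ENNReal.ofReal (V y) ∂μ
        = ∫⁻ y, ⨆ M : ℕ, ENNReal.ofReal (t M y) ∂μ := by
          simp_rw [hsup]
      _ = ⨆ M : ℕ, ∫⁻ y, ENNReal.ofReal (t M y) ∂μ :=
          lintegral_iSup (fun M => (htmeas M).ennreal_ofReal) hmono
      _ ≤ ENNReal.ofReal B := by
          refine iSup_le fun M => ?_
          rw [← ofReal_integral_eq_lintegral_ofReal (htint M μ inferInstance)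
            (ae_of_all _ (ht0 M))]
          exact ENNReal.ofReal_le_ofReal (htbound M)
  have hint : Integrable V μ := by
    refine ⟨hVmeas.aestronglyMeasurable, ?_⟩
    rw [hasFiniteIntegral_iff_ofReal (ae_of_all _ hV0)]
    exact lt_of_le_of_lt hlin ENNReal.ofReal_lt_top
  refine ⟨hint, ?_⟩
  have heq : ENNReal.ofReal (∫ y, V y ∂μ) = ∫⁻ y, ENNReal.ofReal (V y) ∂μ :=
    ofReal_integral_eq_lintegral_ofReal hint (ae_of_all _ hV0)
  have hle := ENNReal.toReal_le_of_le_ofReal hB0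
    (heq ▸ hlin : ENNReal.ofReal (∫ y, V y ∂μ) ≤ ENNReal.ofReal B)
  rwa [ENNReal.toReal_ofReal (integral_nonneg hV0)] at hle

end Aux

/-- `kIter P f m y = ∫ f d(P^m(y,·))`. -/
noncomputable def kIter {X : Type*} [MeasurableSpace X] (P : Kernel X X) (f : X → ℝ)
    (m : ℕ) (y : X) : ℝ := ∫ z, f z ∂(iterKernel P m y)

lemma kIter_def {X : Type*} [MeasurableSpace X] (P : Kernel X X) (f : X → ℝ) (m : ℕ) (y : X) :
    kIter P f m y = ∫ z, f z ∂(iterKernel P m y) := rfl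

/-- Regularity in `θ` of the invariant distribution: if `P_θ` and `P_{θ'}` are
`V`-geometrically ergodic with constants `(C_θ, ρ_θ)`, `(C_{θ'}, ρ_{θ'})` and invariant
probabilities `π_θ`, `π_{θ'}`, then for any `x`,
`‖π_θ - π_{θ'}‖_V ≤ L_{θ'}² {π_θ(V) + L_θ² V(x)} D_V(θ, θ')`,
where `L_θ = C_θ ∨ (1-ρ_θ)⁻¹` and `Δ` is any bound on the `V`-variation
`D_V(θ,θ') = sup_x ‖P_θ(x,·) - P_{θ'}(x,·)‖_V / V(x)`. -/
theorem invariant_measure_V_regularity {X : Type*} [MeasurableSpace X]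
    (P P' : Kernel X X) [IsMarkovKernel P] [IsMarkovKernel P']
    (V : X → ℝ) (hVmeas : Measurable V) (hV1 : ∀ x, 1 ≤ V x)
    (π π' : Measure X) [IsProbabilityMeasure π] [IsProbabilityMeasure π']
    (hVint : Integrable V π) (hVint' : Integrable V π')
    (hinv : π.bind P = π) (hinv' : π'.bind P' = π')
    (C ρ C' ρ' : ℝ) (hC : 1 ≤ C) (hρ : ρ ∈ Set.Ioo (0:ℝ) 1)
    (hC' : 1 ≤ C') (hρ' : ρ' ∈ Set.Ioo (0:ℝ) 1)
    (herg : ∀ (f : X → ℝ), Measurable f → (∀ y, |f y| ≤ V y) →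
      ∀ (n : ℕ) (x : X),
        |∫ y, f y ∂(iterKernel P n x) - ∫ y, f y ∂π| ≤ C * ρ ^ n * V x)
    (herg' : ∀ (f : X → ℝ), Measurable f → (∀ y, |f y| ≤ V y) →
      ∀ (n : ℕ) (x : X),
        |∫ y, f y ∂(iterKernel P' n x) - ∫ y, f y ∂π'| ≤ C' * ρ' ^ n * V x)
    (Δ : ℝ)
    (hΔ : ∀ (g : X → ℝ), Measurable g → (∀ y, |g y| ≤ V y) →
      ∀ y, |∫ z, g z ∂(P y) - ∫ z, g z ∂(P' y)| ≤ Δ * V y)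
    (x : X) (f : X → ℝ) (hf : Measurable f) (hfV : ∀ y, |f y| ≤ V y) :
    |∫ y, f y ∂π - ∫ y, f y ∂π'|
      ≤ (max C' (1 - ρ')⁻¹) ^ 2 *
          ((∫ y, V y ∂π) + (max C (1 - ρ)⁻¹) ^ 2 * V x) * Δ := by
  obtain ⟨hρ0, hρ1⟩ := hρ
  obtain ⟨hρ0', hρ1'⟩ := hρ'
  have hV0 : ∀ y, (0:ℝ) ≤ V y := fun y => zero_le_one.trans (hV1 y)
  have hC0 : (0:ℝ) < C := lt_of_lt_of_le zero_lt_one hC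
  have hC0' : (0:ℝ) < C' := lt_of_lt_of_le zero_lt_one hC'
  have h1ρ : (0:ℝ) < 1 - ρ := by linarith
  have h1ρ' : (0:ℝ) < 1 - ρ' := by linarith
  have hΔ0 : 0 ≤ Δ := by
    have h := hΔ (fun _ => (0:ℝ)) measurable_const (fun y => by simpa using hV0 y) x
    simp only [integral_zero, sub_zero, abs_zero] at h
    nlinarith [hV1 x]
  have hπV0 : (0:ℝ) ≤ ∫ y, V y ∂π := integral_nonneg hV0
  have hπ'V0 : (0:ℝ) ≤ ∫ y, V y ∂π' := integral_nonneg hV0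
  have hIV := integrable_V_iter P hVmeas hV1 π hVint herg
  have hIV' := integrable_V_iter P' hVmeas hV1 π' hVint' herg'
  have hfint : ∀ ν : Measure X, Integrable V ν → Integrable f ν := fun ν hν =>
    hν.mono' hf.aestronglyMeasurable (ae_of_all _ fun y => by
      rw [Real.norm_eq_abs]; exact hfV y)
  have hgmeas : ∀ m, Measurable (kIter P' f m) := fun m =>
    measurable_kernel_integral _ hf
  have hK0 : (0:ℝ) ≤ (∫ y, V y ∂π') + C' := by positivity
  have hgbound : ∀ m y, |kIter P' f m y| ≤ ((∫ y, V y ∂π') + C') * V y := by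
    intro m y
    have h1 : |kIter P' f m y| ≤ ∫ z, V z ∂(iterKernel P' m y) := by
      rw [kIter_def]
      calc |∫ z, f z ∂(iterKernel P' m y)| ≤ ∫ z, |f z| ∂(iterKernel P' m y) := by
            simpa [Real.norm_eq_abs] using
              norm_integral_le_integral_norm (μ := iterKernel P' m y) f
        _ ≤ ∫ z, V z ∂(iterKernel P' m y) :=
            integral_mono (hfint _ (hIV' m y).1).abs (hIV' m y).1 hfV
    have h2 := (hIV' m y).2
    have h3 : ρ' ^ m ≤ 1 := pow_le_one₀ hρ0'.le hρ1'.le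
    have h4 : C' * ρ' ^ m ≤ C' := by nlinarith
    nlinarith [hV1 y, mul_le_mul_of_nonneg_right h4 (hV0 y),
      mul_nonneg hπ'V0 (by linarith [hV1 y] : (0:ℝ) ≤ V y - 1)]
  have hgint : ∀ m (ν : Measure X), Integrable V ν → Integrable (kIter P' f m) ν := by
    intro m ν hν
    exact (hν.const_mul _).mono' (hgmeas m).aestronglyMeasurable
      (ae_of_all _ fun y => by rw [Real.norm_eq_abs]; exact hgbound m y)
  have hgrec : ∀ m y, kIter P' f (m + 1) y = ∫ a, kIter P' f m a ∂(P' y) := fun m y =>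
    integral_iter_succ' P' m y hf (hfint _ (hIV' (m + 1) y).1)
  have hg0 : ∀ y, kIter P' f 0 y = f y := fun y => by
    rw [kIter_def, iterKernel_zero, Kernel.id_apply,
      integral_dirac' f y hf.stronglyMeasurable]
  have hP1V : ∀ y, Integrable V (P y) := fun y => by
    have h := (hIV 1 y).1; rwa [iterKernel_one] at h
  have hP1V' : ∀ y, Integrable V (P' y) := fun y => by
    have h := (hIV' 1 y).1; rwa [iterKernel_one] at h
  have hgclose : ∀ m y, |kIter P' f m y - ∫ z, f z ∂π'| ≤ C' * ρ' ^ m * V y := fun m y =>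
    herg' f hf hfV m y
  -- the key one-step perturbation bound
  have hφ : ∀ m y, |(∫ z, kIter P' f m z ∂(P y)) - ∫ z, kIter P' f m z ∂(P' y)|
      ≤ C' * ρ' ^ m * Δ * V y := by
    intro m y
    have hcpos : 0 < C' * ρ' ^ m := mul_pos hC0' (pow_pos hρ0' m)
    set c := C' * ρ' ^ m with hc
    have hGmeas : Measurable fun z => c⁻¹ * (kIter P' f m z - ∫ w, f w ∂π') :=
      ((hgmeas m).sub measurable_const).const_mul _
    have hGV : ∀ z, |c⁻¹ * (kIter P' f m z - ∫ w, f w ∂π')| ≤ V z := by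
      intro z
      rw [abs_mul, abs_of_pos (inv_pos.mpr hcpos)]
      calc c⁻¹ * |kIter P' f m z - ∫ w, f w ∂π'| ≤ c⁻¹ * (c * V z) :=
            mul_le_mul_of_nonneg_left (hgclose m z) (inv_pos.mpr hcpos).le
        _ = V z := by field_simp
    have h := hΔ _ hGmeas hGV y
    have e : ∀ (ν : Measure X), IsProbabilityMeasure ν → Integrable (kIter P' f m) ν →
        ∫ z, c⁻¹ * (kIter P' f m z - ∫ w, f w ∂π') ∂ν
          = c⁻¹ * ((∫ z, kIter P' f m z ∂ν) - ∫ w, f w ∂π') := by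
      intro ν hν hint
      rw [integral_const_mul, integral_sub hint (integrable_const _), integral_const]
      simp [measure_univ]
    rw [e (P y) inferInstance (hgint m _ (hP1V y)),
      e (P' y) inferInstance (hgint m _ (hP1V' y)),
      ← mul_sub, abs_mul, abs_of_pos (inv_pos.mpr hcpos), sub_sub_sub_cancel_right] at h
    calc |(∫ z, kIter P' f m z ∂(P y)) - ∫ z, kIter P' f m z ∂(P' y)|
        = c * (c⁻¹ * |(∫ z, kIter P' f m z ∂(P y)) - ∫ z, kIter P' f m z ∂(P' y)|) := by
          field_simp
      _ ≤ c * (Δ * V y) := mul_le_mul_of_nonneg_left h hcpos.le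
      _ = C' * ρ' ^ m * Δ * V y := by rw [hc]; ring
  -- integrability of y ↦ ∫ kIter P' f m d(P y)
  have hAbound : ∀ m y, |∫ z, kIter P' f m z ∂(P y)|
      ≤ ((∫ y, V y ∂π') + C') * ((∫ y, V y ∂π) + C) * V y := by
    intro m y
    have h1 : |∫ z, kIter P' f m z ∂(P y)|
        ≤ ((∫ y, V y ∂π') + C') * ∫ z, V z ∂(P y) := by
      calc |∫ z, kIter P' f m z ∂(P y)| ≤ ∫ z, |kIter P' f m z| ∂(P y) := by
            simpa [Real.norm_eq_abs] using
              norm_integral_le_integral_norm (μ := P y) (kIter P' f m)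
        _ ≤ ∫ z, ((∫ w, V w ∂π') + C') * V z ∂(P y) :=
            integral_mono (hgint m _ (hP1V y)).abs ((hP1V y).const_mul _) (hgbound m)
        _ = ((∫ y, V y ∂π') + C') * ∫ z, V z ∂(P y) := integral_const_mul _ _
    have h2 : ∫ z, V z ∂(P y) ≤ (∫ z, V z ∂π) + C * ρ * V y := by
      have h := (hIV 1 y).2; rwa [iterKernel_one, pow_one] at h
    have h3 : (∫ z, V z ∂π) + C * ρ * V y ≤ ((∫ z, V z ∂π) + C) * V y := by
      nlinarith [hV1 y, hπV0, hC0.le, hρ0.le, hρ1.le, hV0 y,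
        mul_nonneg hπV0 (by linarith [hV1 y] : (0:ℝ) ≤ V y - 1),
        mul_nonneg (mul_nonneg hC0.le (hV0 y)) (by linarith : (0:ℝ) ≤ 1 - ρ)]
    calc |∫ z, kIter P' f m z ∂(P y)| ≤ ((∫ y, V y ∂π') + C') * ∫ z, V z ∂(P y) := h1
      _ ≤ ((∫ y, V y ∂π') + C') * (((∫ z, V z ∂π) + C) * V y) := by
          refine mul_le_mul_of_nonneg_left (le_trans h2 h3) hK0
      _ = ((∫ y, V y ∂π') + C') * ((∫ y, V y ∂π) + C) * V y := by ring
  have hAint : ∀ m k, Integrable (fun y => ∫ z, kIter P' f m z ∂(P y)) (iterKernel P k x) := by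
    intro m k
    exact ((hIV k x).1.const_mul (((∫ y, V y ∂π') + C') * ((∫ y, V y ∂π) + C))).mono'
      (measurable_kernel_integral P (hgmeas m)).aestronglyMeasurable
      (ae_of_all _ fun y => by rw [Real.norm_eq_abs]; exact hAbound m y)
  -- the telescoping bound
  have key : ∀ n, |(∫ y, f y ∂(iterKernel P n x)) - kIter P' f n x|
      ≤ C' * Δ * (∫ y, V y ∂π) * (1 - ρ')⁻¹ + C * C' * Δ * V x * (1 - ρ)⁻¹ := by
    intro n
    have hstep : ∀ k, k < n →
        |(∫ y, kIter P' f (n - (k + 1)) y ∂(iterKernel P (k + 1) x))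
          - ∫ y, kIter P' f (n - k) y ∂(iterKernel P k x)|
        ≤ C' * Δ * (∫ y, V y ∂π) * ρ' ^ (n - 1 - k) + C * C' * Δ * V x * ρ ^ k := by
      intro k hk
      set m := n - 1 - k with hm
      have hmk1 : n - (k + 1) = m := by omega
      have hmk2 : n - k = m + 1 := by omega
      have hA'int : Integrable (fun a => ∫ z, kIter P' f m z ∂(P' a)) (iterKernel P k x) := by
        have hI : Integrable (kIter P' f (m + 1)) (iterKernel P k x) :=
          hgint (m + 1) _ (hIV k x).1
        exact hI.congr (ae_of_all _ fun a => hgrec m a)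
      have e1 : ∫ y, kIter P' f (n - (k + 1)) y ∂(iterKernel P (k + 1) x)
          = ∫ a, ∫ z, kIter P' f m z ∂(P a) ∂(iterKernel P k x) := by
        rw [hmk1]
        exact integral_iter_succ P k x (hgmeas m) (hgint m _ (hIV (k + 1) x).1)
      have e2 : ∫ y, kIter P' f (n - k) y ∂(iterKernel P k x)
          = ∫ a, ∫ z, kIter P' f m z ∂(P' a) ∂(iterKernel P k x) := by
        rw [hmk2]
        exact integral_congr_ae (ae_of_all _ fun a => hgrec m a)
      have hcoef : (0:ℝ) ≤ C' * ρ' ^ m * Δ :=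
        mul_nonneg (mul_nonneg hC0'.le (pow_nonneg hρ0'.le m)) hΔ0
      have h5 : (0:ℝ) ≤ C * C' * Δ * V x * ρ ^ k :=
        mul_nonneg (mul_nonneg (mul_nonneg (mul_nonneg hC0.le hC0'.le) hΔ0) (hV0 x))
          (pow_nonneg hρ0.le k)
      have h1 : ρ' ^ m ≤ 1 := pow_le_one₀ hρ0'.le hρ1'.le
      calc |(∫ y, kIter P' f (n - (k + 1)) y ∂(iterKernel P (k + 1) x))
            - ∫ y, kIter P' f (n - k) y ∂(iterKernel P k x)|
          = |∫ a, (∫ z, kIter P' f m z ∂(P a)) - ∫ z, kIter P' f m z ∂(P' a)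
              ∂(iterKernel P k x)| := by
            rw [e1, e2, integral_sub (hAint m k) hA'int]
        _ ≤ ∫ a, |(∫ z, kIter P' f m z ∂(P a)) - ∫ z, kIter P' f m z ∂(P' a)|
              ∂(iterKernel P k x) := by
            simpa [Real.norm_eq_abs] using
              norm_integral_le_integral_norm (μ := iterKernel P k x)
                (fun a => (∫ z, kIter P' f m z ∂(P a)) - ∫ z, kIter P' f m z ∂(P' a))
        _ ≤ ∫ a, C' * ρ' ^ m * Δ * V a ∂(iterKernel P k x) :=
            integral_mono ((hAint m k).sub hA'int).abs ((hIV k x).1.const_mul _)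
              (fun a => hφ m a)
        _ = C' * ρ' ^ m * Δ * ∫ a, V a ∂(iterKernel P k x) := integral_const_mul _ _
        _ ≤ C' * ρ' ^ m * Δ * ((∫ y, V y ∂π) + C * ρ ^ k * V x) :=
            mul_le_mul_of_nonneg_left (hIV k x).2 hcoef
        _ = C' * Δ * (∫ y, V y ∂π) * ρ' ^ m + C * C' * Δ * V x * ρ ^ k * ρ' ^ m := by ring
        _ ≤ C' * Δ * (∫ y, V y ∂π) * ρ' ^ m + C * C' * Δ * V x * ρ ^ k := by
            have h6 := mul_le_of_le_one_right h5 h1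
            linarith
    have htel : ∑ k ∈ Finset.range n,
          ((∫ y, kIter P' f (n - (k + 1)) y ∂(iterKernel P (k + 1) x))
            - ∫ y, kIter P' f (n - k) y ∂(iterKernel P k x))
        = (∫ y, kIter P' f (n - n) y ∂(iterKernel P n x))
            - ∫ y, kIter P' f (n - 0) y ∂(iterKernel P 0 x) :=
      Finset.sum_range_sub (fun k => ∫ y, kIter P' f (n - k) y ∂(iterKernel P k x)) n
    have hend1 : ∫ y, kIter P' f (n - n) y ∂(iterKernel P n x)
        = ∫ y, f y ∂(iterKernel P n x) := by
      rw [Nat.sub_self]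
      exact integral_congr_ae (ae_of_all _ fun y => hg0 y)
    have hend2 : ∫ y, kIter P' f (n - 0) y ∂(iterKernel P 0 x) = kIter P' f n x := by
      rw [Nat.sub_zero, iterKernel_zero, Kernel.id_apply,
        integral_dirac' _ _ (hgmeas n).stronglyMeasurable]
    have hgeom : ∀ r : ℝ, 0 ≤ r → r < 1 → ∀ N : ℕ,
        ∑ k ∈ Finset.range N, r ^ k ≤ (1 - r)⁻¹ := by
      intro r hr0 hr1 N
      have h := geom_sum_Ico_le_of_lt_one hr0 hr1 (m := 0) (n := N)
      rw [← Finset.range_eq_Ico] at h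
      simpa [one_div] using h
    have hs1 : ∑ k ∈ Finset.range n, ρ' ^ (n - 1 - k) ≤ (1 - ρ')⁻¹ := by
      rw [Finset.sum_range_reflect (fun j => ρ' ^ j) n]
      exact hgeom ρ' hρ0'.le hρ1' n
    have hs2 := hgeom ρ hρ0.le hρ1 n
    have hc1 : (0:ℝ) ≤ C' * Δ * (∫ y, V y ∂π) :=
      mul_nonneg (mul_nonneg hC0'.le hΔ0) hπV0
    have hc2 : (0:ℝ) ≤ C * C' * Δ * V x :=
      mul_nonneg (mul_nonneg (mul_nonneg hC0.le hC0'.le) hΔ0) (hV0 x)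
    calc |(∫ y, f y ∂(iterKernel P n x)) - kIter P' f n x|
        = |∑ k ∈ Finset.range n,
            ((∫ y, kIter P' f (n - (k + 1)) y ∂(iterKernel P (k + 1) x))
              - ∫ y, kIter P' f (n - k) y ∂(iterKernel P k x))| := by
          rw [htel, hend1, hend2]
      _ ≤ ∑ k ∈ Finset.range n,
            |(∫ y, kIter P' f (n - (k + 1)) y ∂(iterKernel P (k + 1) x))
              - ∫ y, kIter P' f (n - k) y ∂(iterKernel P k x)| :=
          Finset.abs_sum_le_sum_abs _ _
      _ ≤ ∑ k ∈ Finset.range n,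
            (C' * Δ * (∫ y, V y ∂π) * ρ' ^ (n - 1 - k) + C * C' * Δ * V x * ρ ^ k) :=
          Finset.sum_le_sum (fun k hk => hstep k (Finset.mem_range.mp hk))
      _ = C' * Δ * (∫ y, V y ∂π) * (∑ k ∈ Finset.range n, ρ' ^ (n - 1 - k))
            + C * C' * Δ * V x * (∑ k ∈ Finset.range n, ρ ^ k) := by
          rw [Finset.sum_add_distrib, Finset.mul_sum, Finset.mul_sum]
      _ ≤ C' * Δ * (∫ y, V y ∂π) * (1 - ρ')⁻¹ + C * C' * Δ * V x * (1 - ρ)⁻¹ :=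
          add_le_add (mul_le_mul_of_nonneg_left hs1 hc1)
            (mul_le_mul_of_nonneg_left hs2 hc2)
  -- pass to the limit
  have hmain : ∀ n : ℕ, |(∫ y, f y ∂π) - ∫ y, f y ∂π'|
      ≤ C * ρ ^ n * V x
        + (C' * Δ * (∫ y, V y ∂π) * (1 - ρ')⁻¹ + C * C' * Δ * V x * (1 - ρ)⁻¹)
        + C' * ρ' ^ n * V x := by
    intro n
    have h1 := herg f hf hfV n x
    have h2 := key n
    have h3 : |kIter P' f n x - ∫ y, f y ∂π'| ≤ C' * ρ' ^ n * V x := herg' f hf hfV n x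
    have h1' : |(∫ y, f y ∂π) - ∫ y, f y ∂(iterKernel P n x)| ≤ C * ρ ^ n * V x := by
      rw [abs_sub_comm]; exact h1
    have t1 := abs_sub_le (∫ y, f y ∂π) (∫ y, f y ∂(iterKernel P n x)) (∫ y, f y ∂π')
    have t2 := abs_sub_le (∫ y, f y ∂(iterKernel P n x)) (kIter P' f n x) (∫ y, f y ∂π')
    linarith
  have hlim : Tendsto (fun n : ℕ => C * ρ ^ n * V x
      + (C' * Δ * (∫ y, V y ∂π) * (1 - ρ')⁻¹ + C * C' * Δ * V x * (1 - ρ)⁻¹)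
      + C' * ρ' ^ n * V x) atTop
      (𝓝 (C * 0 * V x
        + (C' * Δ * (∫ y, V y ∂π) * (1 - ρ')⁻¹ + C * C' * Δ * V x * (1 - ρ)⁻¹)
        + C' * 0 * V x)) := by
    have t1 : Tendsto (fun n : ℕ => ρ ^ n) atTop (𝓝 0) :=
      tendsto_pow_atTop_nhds_zero_of_lt_one hρ0.le hρ1
    have t2 : Tendsto (fun n : ℕ => ρ' ^ n) atTop (𝓝 0) :=
      tendsto_pow_atTop_nhds_zero_of_lt_one hρ0'.le hρ1'
    exact (((t1.const_mul C).mul_const (V x)).add tendsto_const_nhds).add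
      ((t2.const_mul C').mul_const (V x))
  have hfinal : |(∫ y, f y ∂π) - ∫ y, f y ∂π'|
      ≤ C' * Δ * (∫ y, V y ∂π) * (1 - ρ')⁻¹ + C * C' * Δ * V x * (1 - ρ)⁻¹ := by
    have h := ge_of_tendsto hlim (Filter.Eventually.of_forall hmain)
    simpa using h
  -- compare with the stated constants
  have i1 : C' * (1 - ρ')⁻¹ ≤ (max C' (1 - ρ')⁻¹) ^ 2 := by
    rw [sq]
    exact mul_le_mul (le_max_left _ _) (le_max_right _ _) (inv_nonneg.mpr h1ρ'.le)
      (le_trans hC0'.le (le_max_left _ _))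
  have i2 : C * (1 - ρ)⁻¹ ≤ (max C (1 - ρ)⁻¹) ^ 2 := by
    rw [sq]
    exact mul_le_mul (le_max_left _ _) (le_max_right _ _) (inv_nonneg.mpr h1ρ.le)
      (le_trans hC0.le (le_max_left _ _))
  have i3 : C' ≤ (max C' (1 - ρ')⁻¹) ^ 2 := by
    have hL : 1 ≤ max C' (1 - ρ')⁻¹ := le_trans hC' (le_max_left _ _)
    nlinarith [le_max_left C' (1 - ρ')⁻¹]
  have i4 : C * C' * (1 - ρ)⁻¹ ≤ (max C' (1 - ρ')⁻¹) ^ 2 * (max C (1 - ρ)⁻¹) ^ 2 := by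
    calc C * C' * (1 - ρ)⁻¹ = C' * (C * (1 - ρ)⁻¹) := by ring
      _ ≤ (max C' (1 - ρ')⁻¹) ^ 2 * (max C (1 - ρ)⁻¹) ^ 2 :=
          mul_le_mul i3 i2 (mul_nonneg hC0.le (inv_nonneg.mpr h1ρ.le)) (sq_nonneg _)
  have f1 : C' * Δ * (∫ y, V y ∂π) * (1 - ρ')⁻¹
      ≤ (max C' (1 - ρ')⁻¹) ^ 2 * (∫ y, V y ∂π) * Δ := by
    calc C' * Δ * (∫ y, V y ∂π) * (1 - ρ')⁻¹
        = (C' * (1 - ρ')⁻¹) * ((∫ y, V y ∂π) * Δ) := by ring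
      _ ≤ (max C' (1 - ρ')⁻¹) ^ 2 * ((∫ y, V y ∂π) * Δ) :=
          mul_le_mul_of_nonneg_right i1 (mul_nonneg hπV0 hΔ0)
      _ = (max C' (1 - ρ')⁻¹) ^ 2 * (∫ y, V y ∂π) * Δ := by ring
  have f2 : C * C' * Δ * V x * (1 - ρ)⁻¹
      ≤ (max C' (1 - ρ')⁻¹) ^ 2 * ((max C (1 - ρ)⁻¹) ^ 2 * V x) * Δ := by
    calc C * C' * Δ * V x * (1 - ρ)⁻¹
        = (C * C' * (1 - ρ)⁻¹) * (V x * Δ) := by ring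
      _ ≤ ((max C' (1 - ρ')⁻¹) ^ 2 * (max C (1 - ρ)⁻¹) ^ 2) * (V x * Δ) :=
          mul_le_mul_of_nonneg_right i4 (mul_nonneg (hV0 x) hΔ0)
      _ = (max C' (1 - ρ')⁻¹) ^ 2 * ((max C (1 - ρ)⁻¹) ^ 2 * V x) * Δ := by ring
  have hexp : (max C' (1 - ρ')⁻¹) ^ 2 * ((∫ y, V y ∂π) + (max C (1 - ρ)⁻¹) ^ 2 * V x) * Δ
      = (max C' (1 - ρ')⁻¹) ^ 2 * (∫ y, V y ∂π) * Δ
        + (max C' (1 - ρ')⁻¹) ^ 2 * ((max C (1 - ρ)⁻¹) ^ 2 * V x) * Δ := by ring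
  linarith
end

section
/- For the interacting tempering acceptance ratio α(x,y) = 1 ∧ (π^β(y)/π^β(x)) with β ∈ (0,1), for any x, x', y with π(x), π(x'), π(y) > 0 and π(x) ≤ π(x'), one has |α(x,y) − α(x',y)| ≤ (π^{−β}(x) − π^{−β}(x')) π^β(y) · 1{π(y) ≤ π(x')}. -/
/-- For the interacting tempering acceptance ratio `α(x,y) = 1 ∧ (π(y)^β / π(x)^β)`
with `β ∈ (0,1)`: for any `x, x', y` with positive density values and `π(x) ≤ π(x')`,
`|α(x,y) - α(x',y)| ≤ (π(x)^{-β} - π(x')^{-β}) π(y)^β · 1{π(y) ≤ π(x')}`. -/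
theorem acceptance_ratio_regularity {X : Type*} (π : X → ℝ) (β : ℝ)
    (hβ : β ∈ Set.Ioo (0:ℝ) 1) (x x' y : X)
    (hx : 0 < π x) (hx' : 0 < π x') (hy : 0 < π y) (hxx' : π x ≤ π x') :
    |min 1 (π y ^ β / π x ^ β) - min 1 (π y ^ β / π x' ^ β)|
      ≤ (π x ^ (-β) - π x' ^ (-β)) * π y ^ β *
          (if π y ≤ π x' then (1:ℝ) else 0) := by
  have hβ0 : 0 ≤ β := le_of_lt hβ.1
  have hbx : 0 < π x ^ β := Real.rpow_pos_of_pos hx β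
  have hbx' : 0 < π x' ^ β := Real.rpow_pos_of_pos hx' β
  have hby : 0 < π y ^ β := Real.rpow_pos_of_pos hy β
  have hbb : π x ^ β ≤ π x' ^ β := Real.rpow_le_rpow hx.le hxx' hβ0
  by_cases h : π y ≤ π x'
  · simp only [h, if_true, mul_one]
    have hyx' : π y ^ β ≤ π x' ^ β := Real.rpow_le_rpow hy.le h hβ0
    have hratio' : π y ^ β / π x' ^ β ≤ 1 := (div_le_one hbx').mpr hyx'
    rw [min_eq_right hratio']
    have hle : π y ^ β / π x' ^ β ≤ min 1 (π y ^ β / π x ^ β) := by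
      refine le_min hratio' ?_
      exact div_le_div_of_nonneg_left hby.le hbx hbb
    rw [abs_of_nonneg (by linarith)]
    have hmin : min 1 (π y ^ β / π x ^ β) ≤ π y ^ β / π x ^ β := min_le_right _ _
    have hneg : π x ^ (-β) = (π x ^ β)⁻¹ := by rw [Real.rpow_neg hx.le]
    have hneg' : π x' ^ (-β) = (π x' ^ β)⁻¹ := by rw [Real.rpow_neg hx'.le]
    rw [hneg, hneg']
    have : π y ^ β / π x ^ β - π y ^ β / π x' ^ β
        = ((π x ^ β)⁻¹ - (π x' ^ β)⁻¹) * π y ^ β := by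
      field_simp
    linarith
  · simp only [h, if_false, mul_zero]
    push_neg at h
    have h1 : (1:ℝ) ≤ π y ^ β / π x' ^ β :=
      (one_le_div hbx').mpr (Real.rpow_le_rpow hx'.le h.le hβ0)
    have h2 : (1:ℝ) ≤ π y ^ β / π x ^ β := le_trans h1 (by
      exact div_le_div_of_nonneg_left hby.le hbx hbb)
    rw [min_eq_left h1, min_eq_left h2, sub_self, abs_zero]
end

section
/- Let π be a positive bounded continuous density, β ∈ (0,1), and for a probability measure θ define the kernel K_θ(x,A) := ∫_A α(x,y) θ(dy) + 1_A(x) ∫ (1 − α(x,y)) θ(dy), where α(x,y) = 1 ∧ (π^β(y)/π^β(x)), and set P_θ := (1−υ)P + υK_θ for υ ∈ (0,1). If f satisfies ‖f π^β‖_∞ < ∞, then for any x, x' with π(x), π(x') > 0: sup_θ |P_θ f(x) − P_θ f(x')| ≤ |Pf(x) − Pf(x')| + |f(x) − f(x')| + 2 ‖f π^β‖_∞ |π^{−β}(x) − π^{−β}(x')|. -/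
open MeasureTheory ProbabilityTheory
open scoped ProbabilityTheory

private lemma lip_min (a b : ℝ) : |min 1 a - min 1 b| ≤ |a - b| := by
  have h1 : a - b ≤ |a - b| := le_abs_self _
  have h2 : b - a ≤ |a - b| := by rw [abs_sub_comm]; exact le_abs_self _
  have h3 : (0:ℝ) ≤ |a - b| := abs_nonneg _
  rw [abs_sub_le_iff]
  constructor <;> rcases le_total 1 a with ha | ha <;> rcases le_total 1 b with hb | hb <;>
    simp [min_eq_left, min_eq_right, ha, hb] <;> linarith

private lemma bound_t {t u v : ℝ} (ht : 0 ≤ t) (hu : 0 < u) (hv : 0 < v) :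
    |min 1 (t / u) - min 1 (t / v)| ≤ t * |u⁻¹ - v⁻¹| := by
  calc |min 1 (t / u) - min 1 (t / v)| ≤ |t / u - t / v| := lip_min _ _
    _ = t * |u⁻¹ - v⁻¹| := by
        rw [div_eq_mul_inv, div_eq_mul_inv, ← mul_sub, abs_mul, abs_of_nonneg ht]

private lemma bound_v {t u v : ℝ} (ht : 0 ≤ t) (hu : 0 < u) (hv : 0 < v) :
    |min 1 (t / u) - min 1 (t / v)| ≤ v * |u⁻¹ - v⁻¹| := by
  rcases le_total t u with h1 | h1 <;> rcases le_total t v with h2 | h2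
  · calc |min 1 (t / u) - min 1 (t / v)| ≤ t * |u⁻¹ - v⁻¹| := bound_t ht hu hv
      _ ≤ v * |u⁻¹ - v⁻¹| := mul_le_mul_of_nonneg_right h2 (abs_nonneg _)
  · -- t ≤ u, v ≤ t  (so v ≤ u)
    have e1 : min 1 (t / u) = t / u := min_eq_right ((div_le_one hu).2 h1)
    have e2 : min 1 (t / v) = 1 := min_eq_left ((one_le_div hv).2 h2)
    have hvu : v ≤ u := h2.trans h1
    have habs : |u⁻¹ - v⁻¹| = v⁻¹ - u⁻¹ := by
      rw [abs_of_nonpos (by simp only [sub_nonpos]; exact inv_anti₀ hv hvu)]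
      ring
    rw [e1, e2, habs]
    have h3 : t / u ≤ 1 := (div_le_one hu).2 h1
    rw [abs_of_nonpos (by linarith)]
    have h4 : v * (v⁻¹ - u⁻¹) = 1 - v / u := by field_simp
    rw [h4]
    have h5 : v / u ≤ t / u := by gcongr
    linarith
  · -- v ≤ u? no: u ≤ t, t ≤ v (so u ≤ v)
    have e1 : min 1 (t / u) = 1 := min_eq_left ((one_le_div hu).2 h1)
    have e2 : min 1 (t / v) = t / v := min_eq_right ((div_le_one hv).2 h2)
    have huv : u ≤ v := h1.trans h2
    have habs : |u⁻¹ - v⁻¹| = u⁻¹ - v⁻¹ := by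
      rw [abs_of_nonneg (by simp only [sub_nonneg]; exact inv_anti₀ hu huv)]
    rw [e1, e2, habs]
    have h3 : t / v ≤ 1 := (div_le_one hv).2 h2
    rw [abs_of_nonneg (by linarith)]
    have h4 : v * (u⁻¹ - v⁻¹) = v / u - 1 := by field_simp
    rw [h4]
    have h5 : u / v ≤ t / v := by gcongr
    have h9 : (v - u) / v ≤ (v - u) / u := by gcongr <;> linarith
    have e3 : (v - u) / v = 1 - u / v := by field_simp
    have e4 : (v - u) / u = v / u - 1 := by field_simp
    linarith
  · rw [min_eq_left ((one_le_div hu).2 h1), min_eq_left ((one_le_div hv).2 h2)]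
    simp
    positivity

/-- Equicontinuity-type bound for the interacting tempering kernels
`P_θ = (1-υ) P + υ K_θ` where
`K_θ f(x) = ∫ α(x,y) f(y) θ(dy) + f(x) ∫ (1-α(x,y)) θ(dy)` and
`α(x,y) = 1 ∧ (π(y)^β / π(x)^β)`: if `‖f π^β‖_∞ ≤ M`, then for all `x, x'` with
`π(x), π(x') > 0` and every probability measure `θ`,
`|P_θ f(x) - P_θ f(x')| ≤ |Pf(x) - Pf(x')| + |f(x) - f(x')| + 2M |π(x)^{-β} - π(x')^{-β}|`. -/
theorem interacting_kernel_equicontinuity {X : Type*} [MeasurableSpace X]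
    (P : Kernel X X) [IsMarkovKernel P]
    (π : X → ℝ) (hπmeas : Measurable π) (hπpos : ∀ z, 0 < π z)
    (hπbdd : ∃ c, ∀ z, π z ≤ c)
    (β : ℝ) (hβ : β ∈ Set.Ioo (0:ℝ) 1) (υ : ℝ) (hυ : υ ∈ Set.Ioo (0:ℝ) 1)
    (f : X → ℝ) (hfmeas : Measurable f)
    (hfint : ∀ z, Integrable f (P z))
    (M : ℝ) (hM : ∀ z, |f z * π z ^ β| ≤ M)
    (θ : Measure X) [IsProbabilityMeasure θ] (x x' : X) :
    |((1 - υ) * ∫ y, f y ∂(P x)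
        + υ * ((∫ y, min 1 (π y ^ β / π x ^ β) * f y ∂θ)
            + f x * ∫ y, (1 - min 1 (π y ^ β / π x ^ β)) ∂θ))
      - ((1 - υ) * ∫ y, f y ∂(P x')
        + υ * ((∫ y, min 1 (π y ^ β / π x' ^ β) * f y ∂θ)
            + f x' * ∫ y, (1 - min 1 (π y ^ β / π x' ^ β)) ∂θ))|
      ≤ |(∫ y, f y ∂(P x)) - ∫ y, f y ∂(P x')| + |f x - f x'|
        + 2 * M * |π x ^ (-β) - π x' ^ (-β)| := by
  have hMnn : 0 ≤ M := le_trans (abs_nonneg _) (hM x)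
  rw [Real.rpow_neg (hπpos x).le, Real.rpow_neg (hπpos x').le]
  have hu : 0 < π x ^ β := Real.rpow_pos_of_pos (hπpos x) β
  have hv : 0 < π x' ^ β := Real.rpow_pos_of_pos (hπpos x') β
  have hgpos : ∀ y, 0 < π y ^ β := fun y => Real.rpow_pos_of_pos (hπpos y) β
  have hgmeas : Measurable fun y => π y ^ β :=
    (Real.continuous_rpow_const hβ.1.le).measurable.comp hπmeas
  have mα : ∀ w : ℝ, Measurable fun y => min 1 (π y ^ β / w) := fun w =>
    measurable_const.min (hgmeas.div_const w)
  have hfb : ∀ y, |f y| ≤ M / π y ^ β := by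
    intro y
    have h := hM y
    rw [abs_mul, abs_of_nonneg (hgpos y).le] at h
    exact (le_div_iff₀ (hgpos y)).2 h
  have key_bound : ∀ w : ℝ, 0 < w → ∀ y, |min 1 (π y ^ β / w) * f y| ≤ M / w := by
    intro w hw y
    have hgy := hgpos y
    have h6 : 0 ≤ min 1 (π y ^ β / w) := le_min zero_le_one (div_nonneg (hgpos y).le hw.le)
    rw [abs_mul, abs_of_nonneg h6]
    calc min 1 (π y ^ β / w) * |f y| ≤ (π y ^ β / w) * (M / π y ^ β) :=
          mul_le_mul (min_le_right _ _) (hfb y) (abs_nonneg _)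
            (div_nonneg (hgpos y).le hw.le)
      _ = M / w := by
          field_simp
  have hint : ∀ w : ℝ, 0 < w → Integrable (fun y => min 1 (π y ^ β / w) * f y) θ := by
    intro w hw
    exact (integrable_const (M / w)).mono' ((mα w).mul hfmeas).aestronglyMeasurable
      (ae_of_all _ fun y => by rw [Real.norm_eq_abs]; exact key_bound w hw y)
  have hαint : ∀ w : ℝ, 0 < w → Integrable (fun y => min 1 (π y ^ β / w)) θ := by
    intro w hw
    refine (integrable_const (1:ℝ)).mono' (mα w).aestronglyMeasurable (ae_of_all _ fun y => ?_)
    have h6 : 0 ≤ min 1 (π y ^ β / w) := le_min zero_le_one (div_nonneg (hgpos y).le hw.le)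
    rw [Real.norm_eq_abs, abs_of_nonneg h6]
    exact min_le_left _ _
  have hone : ∀ w : ℝ, 0 < w →
      ∫ y, (1 - min 1 (π y ^ β / w)) ∂θ = 1 - ∫ y, min 1 (π y ^ β / w) ∂θ := by
    intro w hw
    rw [integral_sub (integrable_const 1) (hαint w hw), integral_const]
    simp
  rw [hone _ hu, hone _ hv]
  set u := π x ^ β with hu_def
  set v := π x' ^ β with hv_def
  set Δ := |u⁻¹ - v⁻¹| with hΔ_def
  set I := ∫ y, f y ∂(P x) with hI_def
  set I' := ∫ y, f y ∂(P x') with hI'_def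
  set A := ∫ y, min 1 (π y ^ β / u) * f y ∂θ with hA_def
  set A' := ∫ y, min 1 (π y ^ β / v) * f y ∂θ with hA'_def
  set C := ∫ y, min 1 (π y ^ β / u) ∂θ with hC_def
  set C' := ∫ y, min 1 (π y ^ β / v) ∂θ with hC'_def
  -- bound |A - A'|
  have hAA : |A - A'| ≤ M * Δ := by
    rw [hA_def, hA'_def, ← integral_sub (hint u hu) (hint v hv)]
    have hb : ∀ y, ‖min 1 (π y ^ β / u) * f y - min 1 (π y ^ β / v) * f y‖ ≤ M * Δ := by
      intro y
      rw [Real.norm_eq_abs, ← sub_mul, abs_mul]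
      calc |min 1 (π y ^ β / u) - min 1 (π y ^ β / v)| * |f y|
          ≤ (π y ^ β * Δ) * (M / π y ^ β) :=
            mul_le_mul (bound_t (hgpos y).le hu hv) (hfb y) (abs_nonneg _)
              (mul_nonneg (hgpos y).le (abs_nonneg _))
        _ = M * Δ := by field_simp [(hgpos y).ne']
    have h := norm_integral_le_of_norm_le_const (μ := θ) (C := M * Δ) (ae_of_all _ hb)
    simpa [Real.norm_eq_abs] using h
  -- bound |C - C'|
  have hCC : |C - C'| ≤ v * Δ := by
    rw [hC_def, hC'_def, ← integral_sub (hαint u hu) (hαint v hv)]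
    have hb : ∀ y, ‖min 1 (π y ^ β / u) - min 1 (π y ^ β / v)‖ ≤ v * Δ := fun y => by
      rw [Real.norm_eq_abs]; exact bound_v (hgpos y).le hu hv
    have h := norm_integral_le_of_norm_le_const (μ := θ) (C := v * Δ) (ae_of_all _ hb)
    simpa [Real.norm_eq_abs] using h
  have hC0 : 0 ≤ C :=
    integral_nonneg fun y => le_min zero_le_one (div_nonneg (hgpos y).le hu.le)
  have hC1 : C ≤ 1 := by
    have h := integral_mono (hαint u hu) (integrable_const 1)
      (fun y => min_le_left _ _)
    simpa using h
  have habs1 : |f x' * (C - C')| ≤ M * Δ := by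
    rw [abs_mul]
    calc |f x'| * |C - C'| ≤ (M / v) * (v * Δ) :=
          mul_le_mul (hfb x') hCC (abs_nonneg _) (div_nonneg hMnn hv.le)
      _ = M * Δ := by field_simp [hv.ne']
  have habs2 : |(f x - f x') * (1 - C)| ≤ |f x - f x'| := by
    rw [abs_mul, abs_of_nonneg (by linarith : (0:ℝ) ≤ 1 - C)]
    nlinarith [abs_nonneg (f x - f x')]
  set D := (A - A') + (f x - f x') * (1 - C) - f x' * (C - C') with hD_def
  have hD : |D| ≤ M * Δ + |f x - f x'| + M * Δ := by
    calc |D| ≤ |(A - A') + (f x - f x') * (1 - C)| + |f x' * (C - C')| := abs_sub _ _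
      _ ≤ |A - A'| + |(f x - f x') * (1 - C)| + |f x' * (C - C')| := by
          have := abs_add_le (A - A') ((f x - f x') * (1 - C))
          linarith
      _ ≤ M * Δ + |f x - f x'| + M * Δ := by
          have := abs_nonneg (A - A')
          linarith
  have key : (1 - υ) * I + υ * (A + f x * (1 - C)) - ((1 - υ) * I' + υ * (A' + f x' * (1 - C')))
      = (1 - υ) * (I - I') + υ * D := by rw [hD_def]; ring
  rw [key]
  have hυ0 : (0:ℝ) ≤ υ := hυ.1.le
  have hυ1 : (0:ℝ) ≤ 1 - υ := by linarith [hυ.2.le]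
  have h1 : |(1 - υ) * (I - I') + υ * D| ≤ (1 - υ) * |I - I'| + υ * |D| := by
    calc |(1 - υ) * (I - I') + υ * D| ≤ |(1 - υ) * (I - I')| + |υ * D| := abs_add_le _ _
      _ = (1 - υ) * |I - I'| + υ * |D| := by
          rw [abs_mul, abs_mul, abs_of_nonneg hυ1, abs_of_nonneg hυ0]
  have h2 : (1 - υ) * |I - I'| ≤ |I - I'| :=
    mul_le_of_le_one_left (abs_nonneg _) (by linarith)
  have h3 : υ * |D| ≤ |D| := mul_le_of_le_one_left (abs_nonneg _) hυ.2.le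
  linarith
end

section
/- Let (U,d) be a metric space, (Ω,𝒜,ℙ) a probability space, μ a Borel probability measure on U, and {K_n} random probability measures (Markov kernels from Ω to U). If for each bounded continuous f : U → ℝ the set Ω_f := {ω : lim_n K_n(ω, f) = μ(f)} has ℙ-probability 1, and U is separable, then the set {ω : ∀ bounded continuous f, lim_n K_n(ω,f) = μ(f)} has ℙ-probability 1. -/
open MeasureTheory ProbabilityTheory Filter Set Metric
open scoped ProbabilityTheory ENNReal NNReal

section TentAux

variable {U : Type*} [MetricSpace U]

/-- A tent-like function equal to `1` on `ball x q` and `0` outside `ball x q'`. -/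
noncomputable def rvTent (x : U) (q q' : ℝ) (u : U) : ℝ :=
  max 0 (min 1 ((q' - dist u x) / (q' - q)))

lemma rvTent_nonneg (x : U) (q q' : ℝ) (u : U) : 0 ≤ rvTent x q q' u := le_max_left _ _

lemma rvTent_le_one (x : U) (q q' : ℝ) (u : U) : rvTent x q q' u ≤ 1 :=
  max_le zero_le_one (min_le_left _ _)

lemma rvTent_continuous (x : U) (q q' : ℝ) : Continuous (rvTent x q q') := by
  apply continuous_const.max
  apply continuous_const.min
  exact (continuous_const.sub (continuous_id.dist continuous_const)).div_const _

lemma rvTent_eq_one {x : U} {q q' : ℝ} (hq : q < q') {u : U} (hu : dist u x < q) :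
    rvTent x q q' u = 1 := by
  have h1 : (1 : ℝ) ≤ (q' - dist u x) / (q' - q) := by
    rw [le_div_iff₀ (by linarith)]
    linarith
  simp [rvTent, min_eq_left h1]

lemma rvTent_eq_zero {x : U} {q q' : ℝ} (hq : q < q') {u : U} (hu : q' ≤ dist u x) :
    rvTent x q q' u = 0 := by
  have h1 : (q' - dist u x) / (q' - q) ≤ 0 :=
    div_nonpos_of_nonpos_of_nonneg (by linarith) (by linarith)
  rw [rvTent, min_eq_right (h1.trans zero_le_one), max_eq_left h1]

/-- Test function for a finite family of triples `(m, q, q')`. -/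
noncomputable def rvTest (x : ℕ → U) (T : Finset (ℕ × ℚ × ℚ)) (u : U) : ℝ :=
  min 1 (∑ i ∈ T, rvTent (x i.1) (i.2.1 : ℝ) (i.2.2 : ℝ) u)

lemma rvTest_nonneg (x : ℕ → U) (T : Finset (ℕ × ℚ × ℚ)) (u : U) : 0 ≤ rvTest x T u :=
  le_min zero_le_one (Finset.sum_nonneg fun _ _ => rvTent_nonneg _ _ _ _)

lemma rvTest_le_one (x : ℕ → U) (T : Finset (ℕ × ℚ × ℚ)) (u : U) : rvTest x T u ≤ 1 :=
  min_le_left _ _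

lemma rvTest_abs_le_one (x : ℕ → U) (T : Finset (ℕ × ℚ × ℚ)) (u : U) : |rvTest x T u| ≤ 1 :=
  abs_le.mpr ⟨by linarith [rvTest_nonneg x T u], rvTest_le_one x T u⟩

lemma rvTest_continuous (x : ℕ → U) (T : Finset (ℕ × ℚ × ℚ)) : Continuous (rvTest x T) :=
  continuous_const.min (continuous_finset_sum _ fun _ _ => rvTent_continuous _ _ _)

/-- If `u` lies in one of the inner balls, the test function is `1`. -/
lemma rvTest_eq_one {x : ℕ → U} {T : Finset (ℕ × ℚ × ℚ)}
    (hT : ∀ i ∈ T, (i.2.1 : ℝ) < (i.2.2 : ℝ)) {u : U}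
    (hu : u ∈ ⋃ i ∈ T, ball (x i.1) (i.2.1 : ℝ)) : rvTest x T u = 1 := by
  rw [mem_iUnion₂] at hu
  obtain ⟨i, hiT, hui⟩ := hu
  have h1 : (1 : ℝ) ≤ ∑ j ∈ T, rvTent (x j.1) (j.2.1 : ℝ) (j.2.2 : ℝ) u := by
    have := Finset.single_le_sum (f := fun j => rvTent (x j.1) (j.2.1 : ℝ) (j.2.2 : ℝ) u)
      (fun j _ => rvTent_nonneg _ _ _ _) hiT
    rwa [rvTent_eq_one (hT i hiT) (mem_ball.mp hui)] at this
  rw [rvTest, min_eq_left h1]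

/-- If `u` lies outside `G` and all outer balls are inside `G`, the test function is `0`. -/
lemma rvTest_eq_zero {x : ℕ → U} {T : Finset (ℕ × ℚ × ℚ)} {G : Set U}
    (hT : ∀ i ∈ T, (i.2.1 : ℝ) < (i.2.2 : ℝ) ∧ ball (x i.1) (i.2.2 : ℝ) ⊆ G) {u : U}
    (hu : u ∉ G) : rvTest x T u = 0 := by
  have hz : ∀ i ∈ T, rvTent (x i.1) (i.2.1 : ℝ) (i.2.2 : ℝ) u = 0 := by
    intro i hi
    refine rvTent_eq_zero (hT i hi).1 ?_
    by_contra hlt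
    exact hu ((hT i hi).2 (mem_ball.mpr (lt_of_not_ge hlt)))
  rw [rvTest, Finset.sum_eq_zero hz, min_eq_right zero_le_one]

/-- Covering lemma: any point of an open set lies in a ball `ball (x m) q` whose enlargement
`ball (x m) q'` is still inside the open set, with rational `q < q'` and `x` a dense sequence. -/
lemma rv_cover {x : ℕ → U} (hx : DenseRange x) {G : Set U} (hG : IsOpen G) {u : U} (hu : u ∈ G) :
    ∃ i : ℕ × ℚ × ℚ, ((i.2.1 : ℝ) < (i.2.2 : ℝ) ∧ ball (x i.1) (i.2.2 : ℝ) ⊆ G) ∧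
      u ∈ ball (x i.1) (i.2.1 : ℝ) := by
  obtain ⟨r, hr, hball⟩ := Metric.isOpen_iff.mp hG u hu
  obtain ⟨m, hm⟩ := Metric.denseRange_iff.mp hx u (r/4) (by linarith)
  obtain ⟨q, hq1, hq2⟩ := exists_rat_btwn (show (r/4 : ℝ) < r/2 by linarith)
  obtain ⟨q', hq'1, hq'2⟩ := exists_rat_btwn (show (q : ℝ) < (q : ℝ) + r/4 by linarith)
  refine ⟨(m, q, q'), ⟨by exact_mod_cast hq'1, ?_⟩, ?_⟩
  · intro v hv
    apply hball
    rw [mem_ball] at hv ⊢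
    calc dist v u ≤ dist v (x m) + dist u (x m) := by
          rw [dist_comm u (x m)]; exact dist_triangle _ _ _
      _ < (q' : ℝ) + r/4 := by exact add_lt_add hv hm
      _ ≤ r := by linarith
  · rw [mem_ball]
    exact hm.trans hq1

end TentAux

section IntegralAux

variable {U : Type*} [MetricSpace U] [MeasurableSpace U] [BorelSpace U]

lemma rvTest_integrable (x : ℕ → U) (T : Finset (ℕ × ℚ × ℚ)) (ν : Measure U)
    [IsFiniteMeasure ν] : Integrable (rvTest x T) ν := by
  have := (BoundedContinuousFunction.ofNormedAddCommGroup (rvTest x T)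
    (rvTest_continuous x T) 1 (fun u => by
      rw [Real.norm_eq_abs]; exact rvTest_abs_le_one x T u)).integrable ν
  simpa using this

lemma rv_lower (x : ℕ → U) (T : Finset (ℕ × ℚ × ℚ)) (ν : Measure U) [IsFiniteMeasure ν]
    (hT : ∀ i ∈ T, (i.2.1 : ℝ) < (i.2.2 : ℝ)) :
    ν (⋃ i ∈ T, ball (x i.1) (i.2.1 : ℝ)) ≤ ENNReal.ofReal (∫ u, rvTest x T u ∂ν) := by
  set s := ⋃ i ∈ T, ball (x i.1) ((i.2.1 : ℚ) : ℝ) with hs_def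
  have hs : MeasurableSet s := T.measurableSet_biUnion (fun i _ => measurableSet_ball)
  have h1 : (ν s).toReal ≤ ∫ u, rvTest x T u ∂ν := by
    rw [← measureReal_def, ← integral_indicator_one hs]
    apply integral_mono ((integrable_const (1 : ℝ)).indicator hs) (rvTest_integrable x T ν)
    intro u
    by_cases hu : u ∈ s
    · rw [Set.indicator_of_mem hu]
      simp only [Pi.one_apply]
      exact (rvTest_eq_one hT hu).ge
    · rw [Set.indicator_of_notMem hu]
      exact rvTest_nonneg x T u
  calc ν s = ENNReal.ofReal ((ν s).toReal) := (ENNReal.ofReal_toReal (measure_ne_top ν s)).symm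
    _ ≤ _ := ENNReal.ofReal_le_ofReal h1

lemma rv_upper (x : ℕ → U) (T : Finset (ℕ × ℚ × ℚ)) (ν : Measure U) [IsFiniteMeasure ν]
    {G : Set U} (hG : MeasurableSet G)
    (hT : ∀ i ∈ T, (i.2.1 : ℝ) < (i.2.2 : ℝ) ∧ ball (x i.1) (i.2.2 : ℝ) ⊆ G) :
    ENNReal.ofReal (∫ u, rvTest x T u ∂ν) ≤ ν G := by
  have h1 : ∫ u, rvTest x T u ∂ν ≤ (ν G).toReal := by
    rw [← measureReal_def, ← integral_indicator_one hG]
    apply integral_mono (rvTest_integrable x T ν) ((integrable_const (1 : ℝ)).indicator hG)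
    intro u
    by_cases hu : u ∈ G
    · rw [Set.indicator_of_mem hu]
      simpa using rvTest_le_one x T u
    · rw [Set.indicator_of_notMem hu, rvTest_eq_zero hT hu]
  calc ENNReal.ofReal (∫ u, rvTest x T u ∂ν) ≤ ENNReal.ofReal ((ν G).toReal) :=
        ENNReal.ofReal_le_ofReal h1
    _ = ν G := ENNReal.ofReal_toReal (measure_ne_top ν G)

end IntegralAux

/-- Random-measure extension of Varadarajan's theorem: if `(U,d)` is a separable metric
space, `μ` a Borel probability measure, and `{K_n}` Markov kernels from `Ω` to `U` such
that for each bounded continuous `f` the set `{ω : K_n(ω,f) → μ(f)}` has full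
probability, then almost surely `K_n(ω,·)` converges weakly to `μ`, i.e. the set
`{ω : ∀ bounded continuous f, K_n(ω,f) → μ(f)}` has full probability. -/
theorem random_varadarajan
    {U : Type*} [MetricSpace U] [TopologicalSpace.SeparableSpace U]
    [MeasurableSpace U] [BorelSpace U]
    {Ω : Type*} [MeasurableSpace Ω] (Pm : Measure Ω) [IsProbabilityMeasure Pm]
    (μ : Measure U) [IsProbabilityMeasure μ]
    (K : ℕ → Kernel Ω U) (hK : ∀ n, IsMarkovKernel (K n))
    (h : ∀ f : U → ℝ, Continuous f → (∃ C, ∀ u, |f u| ≤ C) →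
      ∀ᵐ ω ∂Pm, Tendsto (fun n => ∫ u, f u ∂((K n) ω)) atTop (nhds (∫ u, f u ∂μ))) :
    ∀ᵐ ω ∂Pm, ∀ f : U → ℝ, Continuous f → (∃ C, ∀ u, |f u| ≤ C) →
      Tendsto (fun n => ∫ u, f u ∂((K n) ω)) atTop (nhds (∫ u, f u ∂μ)) := by
  classical
  have hne : Nonempty U := by
    by_contra hcon
    rw [not_nonempty_iff] at hcon
    have h1 : μ Set.univ = 1 := measure_univ
    rw [Set.univ_eq_empty_iff.mpr hcon] at h1
    simp at h1
  obtain ⟨x, hx⟩ := TopologicalSpace.exists_dense_seq U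
  obtain ⟨e, he⟩ := exists_surjective_nat (ℕ × ℚ × ℚ)
  have key : ∀ᵐ ω ∂Pm, ∀ T : Finset (ℕ × ℚ × ℚ),
      Tendsto (fun n => ∫ u, rvTest x T u ∂((K n) ω)) atTop (nhds (∫ u, rvTest x T u ∂μ)) := by
    rw [ae_all_iff]
    intro T
    exact h _ (rvTest_continuous x T) ⟨1, rvTest_abs_le_one x T⟩
  filter_upwards [key] with ω hω
  haveI : ∀ n, IsProbabilityMeasure ((K n) ω) := fun n => (hK n).isProbabilityMeasure ω
  have key_opens : ∀ G : Set U, IsOpen G →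
      μ G ≤ atTop.liminf (fun n => (K n) ω G) := by
    intro G hG
    set P : ℕ × ℚ × ℚ → Prop :=
      fun i => (i.2.1 : ℝ) < (i.2.2 : ℝ) ∧ ball (x i.1) (i.2.2 : ℝ) ⊆ G with hP
    set b : ℕ → Set U := fun n => if P (e n) then ball (x (e n).1) ((e n).2.1 : ℝ) else ∅
      with hb
    have hGb : G = ⋃ n, b n := by
      ext u
      constructor
      · intro hu
        obtain ⟨i, hi, hui⟩ := rv_cover hx hG hu
        obtain ⟨n, rfl⟩ := he i
        refine mem_iUnion.mpr ⟨n, ?_⟩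
        rw [hb]
        simp only [if_pos hi]
        rw [if_pos (show P (e n) from hi)]
        exact hui
      · intro hu
        obtain ⟨n, hn⟩ := mem_iUnion.mp hu
        have hn' : u ∈ (if P (e n) then ball (x (e n).1) ((e n).2.1 : ℝ) else ∅) := hn
        by_cases hp : P (e n)
        · rw [if_pos hp] at hn'
          exact hp.2 (ball_subset_ball (le_of_lt hp.1) hn')
        · rw [if_neg hp] at hn'
          exact absurd hn' (notMem_empty u)
    have hμG : μ G = ⨆ N, μ (accumulate b N) := by
      rw [hGb]; exact measure_iUnion_eq_iSup_accumulate
    rw [hμG]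
    apply iSup_le
    intro N
    set T : Finset (ℕ × ℚ × ℚ) := ((Finset.range (N + 1)).image e).filter P with hTdef
    have hT : ∀ i ∈ T, P i := fun i hi => (Finset.mem_filter.mp hi).2
    have hsub : accumulate b N ⊆ ⋃ i ∈ T, ball (x i.1) (i.2.1 : ℝ) := by
      intro u hu
      rw [Set.mem_accumulate] at hu
      obtain ⟨m, hmN, hm⟩ := hu
      have hm' : u ∈ (if P (e m) then ball (x (e m).1) ((e m).2.1 : ℝ) else ∅) := hm
      by_cases hp : P (e m)
      · rw [if_pos hp] at hm'
        refine mem_biUnion ?_ hm'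
        exact Finset.mem_filter.mpr
          ⟨Finset.mem_image.mpr ⟨m, Finset.mem_range.mpr (by omega), rfl⟩, hp⟩
      · rw [if_neg hp] at hm'
        exact absurd hm' (notMem_empty u)
    calc μ (accumulate b N) ≤ μ (⋃ i ∈ T, ball (x i.1) (i.2.1 : ℝ)) := measure_mono hsub
      _ ≤ ENNReal.ofReal (∫ u, rvTest x T u ∂μ) := rv_lower x T μ (fun i hi => (hT i hi).1)
      _ = atTop.liminf (fun n => ENNReal.ofReal (∫ u, rvTest x T u ∂((K n) ω))) :=
          ((ENNReal.continuous_ofReal.tendsto _).comp (hω T)).liminf_eq.symm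
      _ ≤ atTop.liminf (fun n => (K n) ω G) :=
          liminf_le_liminf (Eventually.of_forall fun n =>
            rv_upper x T ((K n) ω) hG.measurableSet (fun i hi => hT i hi))
  let Pn : ℕ → ProbabilityMeasure U := fun n => ⟨(K n) ω, inferInstance⟩
  let Pμ : ProbabilityMeasure U := ⟨μ, inferInstance⟩
  have h_opens : ∀ G : Set U, IsOpen G → Pμ G ≤ atTop.liminf (fun n => Pn n G) := by
    intro G hG
    have hq := key_opens G hG
    have aux : (ENNReal.ofNNReal (atTop.liminf (fun n => Pn n G))) =
        atTop.liminf (fun n => ((Pn n G : ℝ≥0) : ℝ≥0∞)) := by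
      refine Monotone.map_liminf_of_continuousAt (F := atTop) ENNReal.coe_mono (fun n => Pn n G)
        ENNReal.continuous_coe.continuousAt ?_ ?_
      · refine IsBoundedUnder.isCoboundedUnder_ge ⟨1, ?_⟩
        rw [Filter.eventually_map]
        filter_upwards with n
        exact ProbabilityMeasure.apply_le_one (Pn n) G
      · exact ⟨0, by simp⟩
    rw [← ENNReal.coe_le_coe, aux]
    simp only [ProbabilityMeasure.ennreal_coeFn_eq_coeFn_toMeasure]
    exact hq
  have tend : Tendsto (fun n => Pn n) atTop (nhds Pμ) :=
    MeasureTheory.tendsto_of_forall_isOpen_le_liminf h_opens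
  intro f hf hCex
  obtain ⟨C, hC⟩ := hCex
  let F : BoundedContinuousFunction U ℝ :=
    BoundedContinuousFunction.ofNormedAddCommGroup f hf C (fun u => by
      rw [Real.norm_eq_abs]; exact hC u)
  have hfin := MeasureTheory.ProbabilityMeasure.tendsto_iff_forall_integral_tendsto.mp tend F
  simpa [F, Pn, Pμ] using hfin
end

section
/- For the AM covariance update Γ_{n} defined by Γ_{n+1} = (n/(n+1)) Γ_n + (1/(n+1))((X_{n+1}−μ_n)(X_{n+1}−μ_n)^T + κ I_d) and μ_{n+1} = μ_n + (X_{n+1}−μ_n)/(n+1), for any m < n the operator-norm (or Frobenius-norm) difference satisfies |Γ_n − Γ_{n−m}| ≤ (2/n)(2κ m d + (m/(n−m)) Σ_{j=0}^{n−m−1} |X_{j+1}−μ_j|^2 + Σ_{j=n−m}^{n−1} |X_{j+1}−μ_j|^2) up to the constant factor in the paper, i.e., D_{W^a}(θ_n, θ_{n−m}) ≤ (2dκ^{-1}/n)(2κ m d + (m/(n−m)) Σ_{j=0}^{n−m−1} |X_{j+1}−μ_j|^2 + Σ_{j=n−m}^{n−1} |X_{j+1}−μ_j|^2), given the Lipschitz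 bound D_{W^a}(θ, θ̃) ≤ 2dκ^{-1}|Γ − Γ̃|. -/
open Finset Matrix

attribute [local instance] Matrix.frobeniusNormedAddCommGroup Matrix.frobeniusNormedSpace

lemma norm_vecMulVec_self {d : ℕ} (v : EuclideanSpace ℝ (Fin d)) :
    ‖Matrix.vecMulVec (⇑v) (⇑v)‖ = ‖v‖ ^ 2 := by
  have hS : (0:ℝ) ≤ ∑ i : Fin d, ‖v i‖ ^ 2 :=
    Finset.sum_nonneg fun i _ => sq_nonneg _
  have h1 : ‖Matrix.vecMulVec (⇑v) (⇑v)‖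
      = ((∑ i : Fin d, ‖v i‖ ^ 2) ^ 2) ^ ((1:ℝ)/2) := by
    rw [Matrix.frobenius_norm_def]
    congr 1
    rw [sq, Finset.sum_mul_sum]
    refine Finset.sum_congr rfl fun i _ => Finset.sum_congr rfl fun j _ => ?_
    rw [Matrix.vecMulVec_apply, Real.rpow_two, norm_mul, mul_pow]
  have h2 : ((∑ i : Fin d, ‖v i‖ ^ 2) ^ 2 : ℝ) ^ ((1:ℝ)/2) = ∑ i : Fin d, ‖v i‖ ^ 2 := by
    rw [← Real.rpow_natCast _ 2, ← Real.rpow_mul hS]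
    norm_num
  rw [h1, h2, EuclideanSpace.norm_eq, Real.sq_sqrt hS]

lemma norm_one_matrix_le {d : ℕ} (hd : 0 < d) :
    ‖(1 : Matrix (Fin d) (Fin d) ℝ)‖ ≤ (d : ℝ) := by
  have h := congrArg (NNReal.toReal) (Matrix.frobenius_nnnorm_one (n := Fin d) (α := ℝ))
  push_cast at h
  simp only [Fintype.card_fin, norm_one, mul_one] at h
  rw [h]
  have hd1 : (1:ℝ) ≤ d := by exact_mod_cast hd
  calc Real.sqrt d ≤ Real.sqrt ((d:ℝ)^2) := by
        apply Real.sqrt_le_sqrt; nlinarith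
    _ = d := Real.sqrt_sq (by positivity)

/-- Diminishing adaptation bound for the adaptive Metropolis covariance update:
given the recursions `μ_{n+1} = μ_n + (X_{n+1}-μ_n)/(n+1)` and
`Γ_{n+1} = (n/(n+1)) Γ_n + (1/(n+1))((X_{n+1}-μ_n)(X_{n+1}-μ_n)ᵀ + κ I_d)`, and the
Lipschitz bound `D_{W^a}(θ,θ̃) ≤ 2dκ⁻¹ ‖Γ - Γ̃‖`, for any `m < n`,
`D_{W^a}(θ_n, θ_{n-m}) ≤ (2dκ⁻¹/n)(2κ m d + (m/(n-m)) Σ_{j<n-m} |X_{j+1}-μ_j|²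
+ Σ_{j=n-m}^{n-1} |X_{j+1}-μ_j|²)`. -/
theorem am_diminishing_adaptation (d : ℕ) (hd : 0 < d) (κ : ℝ) (hκ : 0 < κ)
    (X μv : ℕ → EuclideanSpace ℝ (Fin d))
    (Γ : ℕ → Matrix (Fin d) (Fin d) ℝ)
    (hμ0 : μv 0 = 0) (hΓ0 : Γ 0 |>.PosSemidef)
    (hμrec : ∀ n, μv (n+1) = μv n + ((n:ℝ)+1)⁻¹ • (X (n+1) - μv n))
    (hΓrec : ∀ n : ℕ, Γ (n+1) = ((n:ℝ)/((n:ℝ)+1)) • Γ n +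
      (((n:ℝ)+1)⁻¹) • (Matrix.vecMulVec (X (n+1) - μv n) (X (n+1) - μv n) + κ • (1 : Matrix (Fin d) (Fin d) ℝ)))
    (D : ℕ → ℕ → ℝ)
    (hLip : ∀ a b : ℕ, D a b ≤ 2 * d * κ⁻¹ * ‖Γ a - Γ b‖)
    (n m : ℕ) (hmn : m < n) :
    D n (n - m) ≤ (2 * d * κ⁻¹ / n) *
      (2 * κ * m * d
        + ((m : ℝ) / ((n : ℝ) - m)) * ∑ j ∈ Finset.range (n - m), ‖X (j+1) - μv j‖ ^ 2
        + ∑ j ∈ Finset.Ico (n - m) n, ‖X (j+1) - μv j‖ ^ 2) := by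
  set A : ℕ → Matrix (Fin d) (Fin d) ℝ := fun j =>
    Matrix.vecMulVec (X (j+1) - μv j) (X (j+1) - μv j) + κ • (1 : Matrix (Fin d) (Fin d) ℝ)
    with hA_def
  -- key identity
  have hkey : ∀ N : ℕ, (N:ℝ) • Γ N = ∑ j ∈ Finset.range N, A j := by
    intro N
    induction N with
    | zero => simp
    | succ N ih =>
      have hN1 : ((N:ℝ) + 1) ≠ 0 := by positivity
      rw [hΓrec N, smul_add, smul_smul, smul_smul, Finset.sum_range_succ, ← ih]
      push_cast
      rw [mul_div_cancel₀ _ hN1, mul_inv_cancel₀ hN1, one_smul]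
  set k := n - m with hk_def
  have hk : 0 < k := Nat.sub_pos_of_lt hmn
  have hkn : k ≤ n := Nat.sub_le _ _
  have hnR : (0:ℝ) < n := by exact_mod_cast hk.trans_le hkn
  have hkR0 : (0:ℝ) < k := by exact_mod_cast hk
  have hkR : (k:ℝ) = (n:ℝ) - m := by
    rw [hk_def]; push_cast [Nat.cast_sub hmn.le]; ring
  have hmR : ((n:ℝ) - k) = m := by rw [hkR]; ring
  have hΓn : Γ n = (n:ℝ)⁻¹ • ∑ j ∈ Finset.range n, A j := by
    rw [← hkey n, inv_smul_smul₀ hnR.ne']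
  have hΓk : Γ k = (k:ℝ)⁻¹ • ∑ j ∈ Finset.range k, A j := by
    rw [← hkey k, inv_smul_smul₀ hkR0.ne']
  have hsplit : ∑ j ∈ Finset.range n, A j
      = (∑ j ∈ Finset.range k, A j) + ∑ j ∈ Finset.Ico k n, A j := by
    rw [Finset.range_eq_Ico, Finset.range_eq_Ico]
    exact (Finset.sum_Ico_consecutive A (Nat.zero_le k) hkn).symm
  have hdiff : Γ n - Γ k
      = ((n:ℝ)⁻¹ - (k:ℝ)⁻¹) • (∑ j ∈ Finset.range k, A j)
        + (n:ℝ)⁻¹ • ∑ j ∈ Finset.Ico k n, A j := by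
    rw [hΓn, hΓk, hsplit]
    module
  -- bound on each A j
  have hA : ∀ j, ‖A j‖ ≤ ‖X (j+1) - μv j‖ ^ 2 + κ * d := by
    intro j
    calc ‖A j‖ ≤ ‖Matrix.vecMulVec (⇑(X (j+1) - μv j)) (⇑(X (j+1) - μv j))‖
          + ‖κ • (1 : Matrix (Fin d) (Fin d) ℝ)‖ := norm_add_le _ _
      _ ≤ ‖X (j+1) - μv j‖ ^ 2 + κ * d := by
          rw [norm_vecMulVec_self, norm_smul, Real.norm_eq_abs, abs_of_pos hκ]
          exact add_le_add le_rfl (by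
            exact mul_le_mul_of_nonneg_left (norm_one_matrix_le hd) hκ.le)
  set S1 : ℝ := ∑ j ∈ Finset.range k, ‖X (j+1) - μv j‖ ^ 2 with hS1
  set S2 : ℝ := ∑ j ∈ Finset.Ico k n, ‖X (j+1) - μv j‖ ^ 2 with hS2
  have hS1nn : 0 ≤ S1 := Finset.sum_nonneg fun j _ => sq_nonneg _
  have hS2nn : 0 ≤ S2 := Finset.sum_nonneg fun j _ => sq_nonneg _
  have hb1 : ‖∑ j ∈ Finset.range k, A j‖ ≤ S1 + k * (κ * d) := by
    calc ‖∑ j ∈ Finset.range k, A j‖ ≤ ∑ j ∈ Finset.range k, ‖A j‖ :=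
          norm_sum_le _ _
      _ ≤ ∑ j ∈ Finset.range k, (‖X (j+1) - μv j‖ ^ 2 + κ * d) :=
          Finset.sum_le_sum fun j _ => hA j
      _ = S1 + k * (κ * d) := by
          rw [Finset.sum_add_distrib, Finset.sum_const, Finset.card_range, nsmul_eq_mul]
  have hb2 : ‖∑ j ∈ Finset.Ico k n, A j‖ ≤ S2 + m * (κ * d) := by
    calc ‖∑ j ∈ Finset.Ico k n, A j‖ ≤ ∑ j ∈ Finset.Ico k n, ‖A j‖ :=
          norm_sum_le _ _
      _ ≤ ∑ j ∈ Finset.Ico k n, (‖X (j+1) - μv j‖ ^ 2 + κ * d) :=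
          Finset.sum_le_sum fun j _ => hA j
      _ = S2 + m * (κ * d) := by
          have hcard : n - k = m := by omega
          rw [Finset.sum_add_distrib, Finset.sum_const, Nat.card_Ico, hcard, nsmul_eq_mul]
  have habs : |(n:ℝ)⁻¹ - (k:ℝ)⁻¹| = (m:ℝ) / ((n:ℝ) * k) := by
    have h1 : (n:ℝ)⁻¹ - (k:ℝ)⁻¹ = -(((n:ℝ) - k)/((n:ℝ)*k)) := by
      field_simp
      ring
    rw [hmR] at h1
    rw [h1, abs_neg, abs_of_nonneg (by positivity)]
  have hnorm : ‖Γ n - Γ k‖ ≤ (m:ℝ) / ((n:ℝ) * k) * (S1 + k * (κ * d))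
      + (n:ℝ)⁻¹ * (S2 + m * (κ * d)) := by
    rw [hdiff]
    calc ‖_ + _‖ ≤ ‖((n:ℝ)⁻¹ - (k:ℝ)⁻¹) • (∑ j ∈ Finset.range k, A j)‖
          + ‖(n:ℝ)⁻¹ • ∑ j ∈ Finset.Ico k n, A j‖ := norm_add_le _ _
      _ ≤ (m:ℝ) / ((n:ℝ) * k) * (S1 + k * (κ * d)) + (n:ℝ)⁻¹ * (S2 + m * (κ * d)) := by
          rw [norm_smul, norm_smul, Real.norm_eq_abs, Real.norm_eq_abs, habs,
            abs_of_nonneg (by positivity)]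
          gcongr
  have hfac : (0:ℝ) ≤ 2 * d * κ⁻¹ := by positivity
  calc D n k ≤ 2 * d * κ⁻¹ * ‖Γ n - Γ k‖ := hLip n k
    _ ≤ 2 * d * κ⁻¹ * ((m:ℝ) / ((n:ℝ) * k) * (S1 + k * (κ * d))
        + (n:ℝ)⁻¹ * (S2 + m * (κ * d))) := mul_le_mul_of_nonneg_left hnorm hfac
    _ = (2 * d * κ⁻¹ / n) * (2 * κ * m * d + ((m : ℝ) / ((n : ℝ) - m)) * S1 + S2) := by
        rw [← hkR]
        field_simp
        ring
end
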